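/- There is no injective homomorphism of real Lie algebras from sp(4,ℝ) into su(1,3). -/

import Mathlib

open Matrix

attribute [local instance 100] LieRing.ofAssociativeRing

noncomputable section

abbrev M4 : Type := Matrix (Fin 4) (Fin 4) ℂ

/-- The real Lie algebra of `J`-skew-Hermitian traceless complex 4×4 matrices. -/
def suJ (J : M4) : LieSubalgebra ℝ M4 where
  carrier := {X | Xᴴ * J + J * X = 0 ∧ X.trace = 0}
  add_mem' := by
    rintro X Y ⟨hX1, hX2⟩ ⟨hY1, hY2⟩
    refine ⟨?_, by simp [Matrix.trace_add, hX2, hY2]⟩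
    have h : (X + Y)ᴴ * J + J * (X + Y) = (Xᴴ * J + J * X) + (Yᴴ * J + J * Y) := by
      rw [conjTranspose_add]; noncomm_ring
    rw [h, hX1, hY1, add_zero]
  zero_mem' := by simp
  smul_mem' := by
    rintro c X ⟨hX1, hX2⟩
    refine ⟨?_, by simp [hX2]⟩
    have h : (c • X)ᴴ * J + J * (c • X) = c • (Xᴴ * J + J * X) := by
      rw [conjTranspose_smul, star_trivial, smul_mul_assoc, mul_smul_comm, smul_add]
    rw [h, hX1, smul_zero]
  lie_mem' := by
    rintro X Y ⟨hX1, hX2⟩ ⟨hY1, hY2⟩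
    have hX : Xᴴ * J = -(J * X) := eq_neg_of_add_eq_zero_left hX1
    have hY : Yᴴ * J = -(J * Y) := eq_neg_of_add_eq_zero_left hY1
    constructor
    · rw [Ring.lie_def]
      calc (X * Y - Y * X)ᴴ * J + J * (X * Y - Y * X)
          = Yᴴ * (Xᴴ * J) - Xᴴ * (Yᴴ * J) + (J * (X * Y) - J * (Y * X)) := by
            rw [conjTranspose_sub, conjTranspose_mul, conjTranspose_mul]; noncomm_ring
        _ = Yᴴ * (-(J * X)) - Xᴴ * (-(J * Y)) + (J * (X * Y) - J * (Y * X)) := by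
            rw [hX, hY]
        _ = -((Yᴴ * J) * X) + (Xᴴ * J) * Y + (J * (X * Y) - J * (Y * X)) := by
            noncomm_ring
        _ = -((-(J * Y)) * X) + (-(J * X)) * Y + (J * (X * Y) - J * (Y * X)) := by
            rw [hX, hY]
        _ = 0 := by noncomm_ring
    · rw [Ring.lie_def, Matrix.trace_sub, Matrix.trace_mul_comm, sub_self]

/-- `J₁₃ = diag(−1,1,1,1)`. -/
def J13 : M4 := Matrix.diagonal ![-1, 1, 1, 1]

/-- `su(1,3)` as a real Lie subalgebra of the 4×4 complex matrices. -/
def su13 : LieSubalgebra ℝ M4 := suJ J13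

/-- The standard symplectic matrix `Ω = [[0, I₂], [−I₂, 0]]`. -/
def Omega : Matrix (Fin 4) (Fin 4) ℝ :=
  !![0, 0, 1, 0; 0, 0, 0, 1; -1, 0, 0, 0; 0, -1, 0, 0]

/-- `sp(4,ℝ) = {X : XᵀΩ + ΩX = 0}` as a real Lie subalgebra of the 4×4 real matrices. -/
def sp4 : LieSubalgebra ℝ (Matrix (Fin 4) (Fin 4) ℝ) where
  carrier := {X | Xᵀ * Omega + Omega * X = 0}
  add_mem' := by
    intro X Y hX hY
    simp only [Set.mem_setOf_eq] at *
    have h : (X + Y)ᵀ * Omega + Omega * (X + Y)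
        = (Xᵀ * Omega + Omega * X) + (Yᵀ * Omega + Omega * Y) := by
      rw [transpose_add]; noncomm_ring
    rw [h, hX, hY, add_zero]
  zero_mem' := by simp
  smul_mem' := by
    intro c X hX
    simp only [Set.mem_setOf_eq] at *
    have h : (c • X)ᵀ * Omega + Omega * (c • X) = c • (Xᵀ * Omega + Omega * X) := by
      rw [transpose_smul, smul_mul_assoc, mul_smul_comm, smul_add]
    rw [h, hX, smul_zero]
  lie_mem' := by
    intro X Y hX1 hY1
    simp only [Set.mem_setOf_eq] at *
    have hX : Xᵀ * Omega = -(Omega * X) := eq_neg_of_add_eq_zero_left hX1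
    have hY : Yᵀ * Omega = -(Omega * Y) := eq_neg_of_add_eq_zero_left hY1
    rw [Ring.lie_def]
    calc (X * Y - Y * X)ᵀ * Omega + Omega * (X * Y - Y * X)
        = Yᵀ * (Xᵀ * Omega) - Xᵀ * (Yᵀ * Omega) + (Omega * (X * Y) - Omega * (Y * X)) := by
          rw [transpose_sub, transpose_mul, transpose_mul]; noncomm_ring
      _ = Yᵀ * (-(Omega * X)) - Xᵀ * (-(Omega * Y)) + (Omega * (X * Y) - Omega * (Y * X)) := by
          rw [hX, hY]
      _ = -((Yᵀ * Omega) * X) + (Xᵀ * Omega) * Y + (Omega * (X * Y) - Omega * (Y * X)) := by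
          noncomm_ring
      _ = -((-(Omega * Y)) * X) + (-(Omega * X)) * Y + (Omega * (X * Y) - Omega * (Y * X)) := by
          rw [hX, hY]
      _ = 0 := by noncomm_ring


/-! ### Auxiliary machinery for the proof -/

/-- `J`-skew-Hermitian (no trace condition). -/
def SkewJ (X : M4) : Prop := Xᴴ * J13 + J13 * X = 0

lemma skewJ_of_mem {X : M4} (h : X ∈ su13) : SkewJ X := h.1

lemma skewJ_neg {X : M4} (h : SkewJ X) : SkewJ (-X) := by
  unfold SkewJ at *
  rw [conjTranspose_neg, neg_mul, mul_neg, ← neg_add, h, neg_zero]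

lemma skewJ_add {X Y : M4} (hX : SkewJ X) (hY : SkewJ Y) : SkewJ (X + Y) := by
  unfold SkewJ at *
  have : (X + Y)ᴴ * J13 + J13 * (X + Y) = (Xᴴ * J13 + J13 * X) + (Yᴴ * J13 + J13 * Y) := by
    rw [conjTranspose_add]; noncomm_ring
  rw [this, hX, hY, add_zero]

/-- The (indefinite) Hermitian pairing attached to `J13`. -/
def phiJ (v w : Fin 4 → ℂ) : ℂ := star v ⬝ᵥ (J13 *ᵥ w)

lemma phiJ_smul_left (a : ℂ) (v w : Fin 4 → ℂ) : phiJ (a • v) w = star a * phiJ v w := by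
  simp [phiJ, smul_dotProduct]

lemma phiJ_sub_left (v v' w : Fin 4 → ℂ) : phiJ (v - v') w = phiJ v w - phiJ v' w := by
  simp [phiJ, sub_dotProduct]

lemma phiJ_smul_right (a : ℂ) (v w : Fin 4 → ℂ) : phiJ v (a • w) = a * phiJ v w := by
  simp [phiJ, mulVec_smul]

lemma phiJ_sub_right (v w w' : Fin 4 → ℂ) : phiJ v (w - w') = phiJ v w - phiJ v w' := by
  simp [phiJ, mulVec_sub, dotProduct_sub]

lemma phiJ_zero_left (w : Fin 4 → ℂ) : phiJ 0 w = 0 := by simp [phiJ]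
lemma phiJ_zero_right (v : Fin 4 → ℂ) : phiJ v 0 = 0 := by simp [phiJ]

lemma skew_phiJ {X : M4} (hX : SkewJ X) (v w : Fin 4 → ℂ) :
    phiJ (X *ᵥ v) w + phiJ v (X *ᵥ w) = 0 := by
  have h1 : phiJ (X *ᵥ v) w = star v ⬝ᵥ ((Xᴴ * J13) *ᵥ w) := by
    rw [phiJ, star_mulVec, dotProduct_mulVec, vecMul_vecMul, ← dotProduct_mulVec]
  have h2 : phiJ v (X *ᵥ w) = star v ⬝ᵥ ((J13 * X) *ᵥ w) := by
    rw [phiJ, mulVec_mulVec]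
  rw [h1, h2, ← dotProduct_add, ← add_mulVec, hX, zero_mulVec, dotProduct_zero]

/-- Generalized eigenvector predicate. -/
def GenEv (X : M4) (l : ℂ) (v : Fin 4 → ℂ) : Prop := ∃ k : ℕ, ((X - l • 1) ^ k) *ᵥ v = 0

lemma phiJ_eq_zero_aux {X : M4} (hX : SkewJ X) (N : ℕ) :
    ∀ m n : ℕ, m + n ≤ N → ∀ (a b : ℂ) (v w : Fin 4 → ℂ), star a + b ≠ 0 →
      ((X - a • 1) ^ m) *ᵥ v = 0 → ((X - b • 1) ^ n) *ᵥ w = 0 → phiJ v w = 0 := by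
  induction N with
  | zero =>
    intro m n hmn a b v w hab hv hw
    obtain ⟨rfl, rfl⟩ : m = 0 ∧ n = 0 := by omega
    simp only [pow_zero, one_mulVec] at hv hw
    simp [hv, phiJ_zero_left]
  | succ N ih =>
    intro m n hmn a b v w hab hv hw
    match m, n with
    | 0, n =>
      simp only [pow_zero, one_mulVec] at hv
      simp [hv, phiJ_zero_left]
    | m, 0 =>
      simp only [pow_zero, one_mulVec] at hw
      simp [hw, phiJ_zero_right]
    | m+1, n+1 =>
      have key : phiJ ((X - a • 1) *ᵥ v) w + phiJ v ((X - b • 1) *ᵥ w)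
          = -(star a + b) * phiJ v w := by
        have e1 : (X - a • 1) *ᵥ v = X *ᵥ v - a • v := by
          rw [sub_mulVec, smul_mulVec, one_mulVec]
        have e2 : (X - b • 1) *ᵥ w = X *ᵥ w - b • w := by
          rw [sub_mulVec, smul_mulVec, one_mulVec]
        rw [e1, e2, phiJ_sub_left, phiJ_sub_right, phiJ_smul_left, phiJ_smul_right]
        have := skew_phiJ hX v w
        ring_nf
        ring_nf at this
        linear_combination this
      have t1 : phiJ ((X - a • 1) *ᵥ v) w = 0 := by
        refine ih m (n+1) (by omega) a b _ w hab ?_ hw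
        rw [mulVec_mulVec, ← pow_succ]
        exact hv
      have t2 : phiJ v ((X - b • 1) *ᵥ w) = 0 := by
        refine ih (m+1) n (by omega) a b v _ hab hv ?_
        rw [mulVec_mulVec, ← pow_succ]
        exact hw
      rw [t1, t2] at key
      have h0 : -(star a + b) * phiJ v w = 0 := by rw [← key]; ring
      rcases mul_eq_zero.mp h0 with h | h
      · exact absurd (by linear_combination -h) hab
      · exact h

lemma phiJ_eq_zero {X : M4} (hX : SkewJ X) {a b : ℂ} {v w : Fin 4 → ℂ}
    (hab : star a + b ≠ 0) (hv : GenEv X a v) (hw : GenEv X b w) : phiJ v w = 0 := by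
  obtain ⟨m, hm⟩ := hv
  obtain ⟨n, hn⟩ := hw
  exact phiJ_eq_zero_aux hX (m + n) m n le_rfl a b v w hab hm hn

lemma self_phiJ_zero {u : Fin 4 → ℂ} (h0 : u 0 = 0) (hphi : phiJ u u = 0) : u = 0 := by
  have expand : phiJ u u = star (u 0) * (-1 * u 0) + (star (u 1) * u 1
      + (star (u 2) * u 2 + star (u 3) * u 3)) := by
    simp [phiJ, J13, dotProduct, mulVec_diagonal, Fin.sum_univ_four, Pi.star_apply]
    ring
  rw [h0] at expand
  simp only [mul_zero, star_zero, zero_mul, zero_add, mul_neg, neg_zero] at expand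
  rw [hphi] at expand
  have h1 : Complex.normSq (u 1) + Complex.normSq (u 2) + Complex.normSq (u 3) = 0 := by
    have := congrArg Complex.re expand
    simp only [Complex.zero_re, Complex.add_re] at this
    have e : ∀ z : ℂ, (star z * z).re = Complex.normSq z := fun z => by
      simp [Complex.mul_re, Complex.normSq_apply]
    rw [e, e, e] at this
    linarith
  have n1 : u 1 = 0 := by
    have := Complex.normSq_nonneg (u 1)
    have := Complex.normSq_nonneg (u 2)
    have := Complex.normSq_nonneg (u 3)
    exact Complex.normSq_eq_zero.mp (by linarith)
  have n2 : u 2 = 0 := by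
    have := Complex.normSq_nonneg (u 1)
    have := Complex.normSq_nonneg (u 2)
    have := Complex.normSq_nonneg (u 3)
    exact Complex.normSq_eq_zero.mp (by linarith)
  have n3 : u 3 = 0 := by
    have := Complex.normSq_nonneg (u 1)
    have := Complex.normSq_nonneg (u 2)
    have := Complex.normSq_nonneg (u 3)
    exact Complex.normSq_eq_zero.mp (by linarith)
  funext i
  fin_cases i <;> simp [h0, n1, n2, n3]

lemma parallel_of_phiJ {v w : Fin 4 → ℂ} (hv : v ≠ 0) (hw : w ≠ 0)
    (hvv : phiJ v v = 0) (hvw : phiJ v w = 0) (hwv : phiJ w v = 0) (hww : phiJ w w = 0) :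
    ∃ c : ℂ, w = c • v := by
  have hv0 : v 0 ≠ 0 := fun h => hv (self_phiJ_zero h hvv)
  have hw0 : w 0 ≠ 0 := fun h => hw (self_phiJ_zero h hww)
  set u : Fin 4 → ℂ := w 0 • v - v 0 • w with hu
  have hu0 : u 0 = 0 := by simp [hu]; ring
  have huu : phiJ u u = 0 := by
    simp only [hu, phiJ_sub_left, phiJ_sub_right, phiJ_smul_left, phiJ_smul_right,
      hvv, hvw, hwv, hww]
    ring
  have := self_phiJ_zero hu0 huu
  rw [hu, sub_eq_zero] at this
  refine ⟨w 0 / v 0, ?_⟩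
  have := congrArg (fun x => (v 0)⁻¹ • x) this
  simpa [smul_smul, inv_mul_cancel₀ hv0, div_eq_inv_mul, mul_comm] using this.symm

lemma end_pow_eq (X : M4) (l : ℂ) (k : ℕ) (v : Fin 4 → ℂ) :
    ((X.mulVecLin - l • 1) ^ k) v = ((X - l • 1) ^ k) *ᵥ v := by
  have h1 : X.mulVecLin - l • 1 = Matrix.toLinAlgEquiv' (X - l • 1) := by
    rw [map_sub, _root_.map_smul, _root_.map_one]
    rfl
  rw [h1, ← map_pow]
  rfl

lemma genEv_iff (X : M4) (l : ℂ) (v : Fin 4 → ℂ) :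
    GenEv X l v ↔ v ∈ (Module.End.genEigenspace X.mulVecLin l) ⊤ := by
  rw [Module.End.mem_genEigenspace_top]
  constructor
  · rintro ⟨k, hk⟩; exact ⟨k, by rw [LinearMap.mem_ker, end_pow_eq]; exact hk⟩
  · rintro ⟨k, hk⟩; exact ⟨k, by rw [LinearMap.mem_ker, end_pow_eq] at hk; exact hk⟩

lemma not_parallel {X : M4} {a b : ℂ} {v w : Fin 4 → ℂ} (hab : a ≠ b)
    (hv : GenEv X a v) (hw : GenEv X b w) (hwne : w ≠ 0) : ∀ c : ℂ, w ≠ c • v := by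
  intro c hc
  have hcne : c ≠ 0 := by rintro rfl; simp at hc; exact hwne hc
  have hvne : v ≠ 0 := by rintro rfl; simp at hc; exact hwne hc
  have hv' : v ∈ (Module.End.genEigenspace X.mulVecLin a) ⊤ := (genEv_iff X a v).mp hv
  have hw' : v ∈ (Module.End.genEigenspace X.mulVecLin b) ⊤ := by
    have : v = c⁻¹ • w := by rw [hc, smul_smul, inv_mul_cancel₀ hcne, one_smul]
    rw [this]
    exact Submodule.smul_mem _ _ ((genEv_iff X b w).mp hw)
  exact hvne <| Submodule.disjoint_def.mp
    (Module.End.disjoint_genEigenspace X.mulVecLin hab ⊤ ⊤) v hv' hw'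

lemma main_contradiction {X : M4} (hX : SkewJ X) {a b : ℂ} {v w : Fin 4 → ℂ}
    (hv : GenEv X a v) (hw : GenEv X b w) (hvne : v ≠ 0) (hwne : w ≠ 0)
    (ha : 0 < a.re) (hb : 0 < b.re) (hnp : ∀ c : ℂ, w ≠ c • v) : False := by
  have key : ∀ x y : ℂ, 0 < x.re → 0 < y.re → star x + y ≠ 0 := by
    intro x y hx hy h
    have := congrArg Complex.re h
    simp [Complex.add_re] at this
    linarith
  obtain ⟨c, hc⟩ := parallel_of_phiJ hvne hwne
    (phiJ_eq_zero hX (key a a ha ha) hv hv)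
    (phiJ_eq_zero hX (key a b ha hb) hv hw)
    (phiJ_eq_zero hX (key b a hb ha) hw hv)
    (phiJ_eq_zero hX (key b b hb hb) hw hw)
  exact hnp c hc

lemma genEv_neg {X : M4} {l : ℂ} {v : Fin 4 → ℂ} (h : GenEv X l v) : GenEv (-X) (-l) v := by
  obtain ⟨k, hk⟩ := h
  refine ⟨k, ?_⟩
  have e : -X - (-l) • 1 = -(X - l • 1) := by rw [neg_smul]; abel
  rw [e, neg_pow, ← mulVec_mulVec, hk, mulVec_zero]

lemma sum_mulVec' {α : Type} (s : Finset α) (f : α → M4) (v : Fin 4 → ℂ) :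
    (∑ i ∈ s, f i) *ᵥ v = ∑ i ∈ s, f i *ᵥ v := by
  classical
  induction s using Finset.induction with
  | empty => simp
  | @insert _ _ h ih => rw [Finset.sum_insert h, Finset.sum_insert h, add_mulVec, ih]

lemma add_pow_mulVec {S T : M4} (hST : Commute S T) {m n : ℕ} {v : Fin 4 → ℂ}
    (hS : (S ^ m) *ᵥ v = 0) (hT : (T ^ n) *ᵥ v = 0) : ((S + T) ^ (m + n)) *ᵥ v = 0 := by
  rw [hST.add_pow' (m + n), sum_mulVec']
  apply Finset.sum_eq_zero
  intro x hx
  rw [Finset.HasAntidiagonal.mem_antidiagonal] at hx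
  rw [smul_mulVec]
  rcases le_or_gt m x.1 with h | h
  · have hS' : S ^ x.1 *ᵥ v = 0 := by
      have e : S ^ x.1 = S ^ (x.1 - m) * S ^ m := by rw [← pow_add]; congr 1; omega
      rw [e, ← mulVec_mulVec, hS, mulVec_zero]
    rw [(hST.pow_pow x.1 x.2).eq, ← mulVec_mulVec, hS', mulVec_zero, smul_zero]
  · have hT' : T ^ x.2 *ᵥ v = 0 := by
      have e : T ^ x.2 = T ^ (x.2 - n) * T ^ n := by rw [← pow_add]; congr 1; omega
      rw [e, ← mulVec_mulVec, hT, mulVec_zero]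
    rw [← mulVec_mulVec, hT', mulVec_zero, smul_zero]

lemma genEv_combine {A B : M4} (hAB : Commute A B) {l m : ℂ} {v : Fin 4 → ℂ}
    (hA : GenEv A l v) (hB : GenEv B m v) (s t : ℂ) :
    GenEv (s • A + t • B) (s * l + t * m) v := by
  obtain ⟨k1, h1⟩ := hA
  obtain ⟨k2, h2⟩ := hB
  have e : s • A + t • B - (s * l + t * m) • 1 = s • (A - l • 1) + t • (B - m • 1) := by
    rw [smul_sub, smul_sub, smul_smul, smul_smul, add_smul]
    abel
  refine ⟨k1 + k2, ?_⟩
  rw [e]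
  have hc : Commute (s • (A - l • 1)) (t • (B - m • 1)) := by
    apply Commute.smul_left
    apply Commute.smul_right
    exact ((hAB.sub_right ((Commute.one_right A).smul_right m)).sub_left
      (((Commute.one_left B).smul_left l).sub_right
        (((Commute.refl (1 : M4)).smul_left l).smul_right m)))
  apply add_pow_mulVec hc
  · rw [smul_pow]; simp [smul_mulVec, h1]
  · rw [smul_pow]; simp [smul_mulVec, h2]

lemma shift_pow {A B : M4} (hAB : A * B - B * A = B + B) (l : ℂ) (k : ℕ) :
    (A - (l + 2) • 1) ^ k * B = B * (A - l • 1) ^ k := by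
  have base : (A - (l + 2) • 1) * B = B * (A - l • 1) := by
    have hrel : A * B = B * A + B + B := by
      rw [sub_eq_iff_eq_add.mp hAB]; abel
    rw [sub_mul, mul_sub, hrel, smul_mul_assoc, mul_smul_comm, one_mul, mul_one,
      add_smul, two_smul]
    abel
  induction k with
  | zero => simp
  | succ k ih =>
    rw [pow_succ, mul_assoc, base, ← mul_assoc, ih, mul_assoc, ← pow_succ, pow_succ']

lemma commute_pow_sub {A B : M4} (hAB : Commute A B) (l : ℂ) (k : ℕ) :
    (A - l • 1) ^ k * B = B * (A - l • 1) ^ k := by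
  have : Commute (A - l • 1) B := (hAB.sub_left ((Commute.one_left B).smul_left l))
  exact (this.pow_left k).eq

lemma matrix_ne_zero_exists_mulVec {B : M4} (hB : B ≠ 0) : ∃ x, B *ᵥ x ≠ 0 := by
  by_contra h
  push_neg at h
  apply hB
  ext i j
  have := congrFun (h (Pi.single j 1)) i
  rw [mulVec_single] at this
  simpa using this

/-- Existence of a joint generalized eigenvector pair shifted by a root vector. -/
lemma exists_joint (A1 A2 B : M4) (hcomm : Commute A1 A2)
    (hrel : A1 * B - B * A1 = B + B) (hc2 : Commute A2 B) (hB : B ≠ 0) :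
    ∃ (l m : ℂ) (v : Fin 4 → ℂ),
      GenEv A1 l v ∧ GenEv A2 m v ∧ v ≠ 0 ∧
      GenEv A1 (l + 2) (B *ᵥ v) ∧ GenEv A2 m (B *ᵥ v) ∧ B *ᵥ v ≠ 0 := by
  set F : Fin 2 → Module.End ℂ (Fin 4 → ℂ) := ![A1.mulVecLin, A2.mulVecLin] with hF
  have HP : Pairwise fun i j => Commute (F i) (F j) := by
    intro i j hij
    have hc : Commute A1.mulVecLin A2.mulVecLin := by
      have := hcomm.map (Matrix.toLinAlgEquiv' (R := ℂ) (n := Fin 4))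
      exact this
    fin_cases i <;> fin_cases j <;>
      simp only [hF, Matrix.cons_val_zero, Matrix.cons_val_one, Matrix.head_cons] <;>
      first
        | exact absurd rfl hij
        | exact hc
        | exact hc.symm
  have htop :=
    Module.End.iSup_iInf_maxGenEigenspace_eq_top_of_iSup_maxGenEigenspace_eq_top_of_commute
      F HP (fun i => Module.End.iSup_maxGenEigenspace_eq_top _)
  have hex : ∃ (χ : Fin 2 → ℂ) (v : Fin 4 → ℂ),
      v ∈ (⨅ i, Module.End.maxGenEigenspace (F i) (χ i)) ∧ B *ᵥ v ≠ 0 := by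
    by_contra h
    push_neg at h
    obtain ⟨x, hx⟩ := matrix_ne_zero_exists_mulVec hB
    apply hx
    have hx' : x ∈ ⨆ (χ : Fin 2 → ℂ), ⨅ i, Module.End.maxGenEigenspace (F i) (χ i) :=
      htop ▸ Submodule.mem_top
    exact Submodule.iSup_induction (motive := fun y => B *ᵥ y = 0) _ hx' (fun χ y hy => h χ y hy)
      (mulVec_zero B)
      (fun y z hy hz => by rw [mulVec_add, hy, hz, add_zero])
  obtain ⟨χ, v, hv, hBv⟩ := hex
  rw [Module.End.mem_iInf_maxGenEigenspace_iff] at hv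
  obtain ⟨a, ha⟩ := hv 0
  obtain ⟨b, hb⟩ := hv 1
  have ha' : ((A1 - χ 0 • 1) ^ a) *ᵥ v = 0 := by
    rw [← end_pow_eq]; simpa [hF] using ha
  have hb' : ((A2 - χ 1 • 1) ^ b) *ᵥ v = 0 := by
    rw [← end_pow_eq]; simpa [hF] using hb
  refine ⟨χ 0, χ 1, v, ⟨a, ha'⟩, ⟨b, hb'⟩, ?_, ⟨a, ?_⟩, ⟨b, ?_⟩, hBv⟩
  · rintro rfl; rw [mulVec_zero] at hBv; exact hBv rfl
  · rw [mulVec_mulVec, shift_pow hrel, ← mulVec_mulVec, ha', mulVec_zero]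
  · rw [mulVec_mulVec, commute_pow_sub hc2, ← mulVec_mulVec, hb', mulVec_zero]

lemma re_ne_of_add_two (z : ℂ) : z ≠ z + 2 := by
  intro h
  have := congrArg Complex.re h
  simp [Complex.add_re] at this

/-- The final contradiction: two commuting "root `sl₂`" configurations cannot coexist
inside the skew algebra of a form of isotropic rank one. -/
lemma final_contradiction {A1 A2 : M4} (hS1 : SkewJ A1) (hS2 : SkewJ A2)
    (hcomm : Commute A1 A2) {l1 m1 l2 m2 : ℂ} {v1 w1 v2 w2 : Fin 4 → ℂ}
    (hv1 : v1 ≠ 0) (hw1 : w1 ≠ 0) (hv2 : v2 ≠ 0) (hw2 : w2 ≠ 0)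
    (g1 : GenEv A1 l1 v1) (g2 : GenEv A2 m1 v1)
    (g3 : GenEv A1 (l1 + 2) w1) (g4 : GenEv A2 m1 w1)
    (k1 : GenEv A2 l2 v2) (k2 : GenEv A1 m2 v2)
    (k3 : GenEv A2 (l2 + 2) w2) (k4 : GenEv A1 m2 w2) : False := by
  have np1 : ∀ c : ℂ, w1 ≠ c • v1 := not_parallel (re_ne_of_add_two l1) g1 g3 hw1
  have np2 : ∀ c : ℂ, v1 ≠ c • w1 :=
    not_parallel (fun h => re_ne_of_add_two l1 h.symm) g3 g1 hv1
  have np3 : ∀ c : ℂ, w2 ≠ c • v2 := not_parallel (re_ne_of_add_two l2) k1 k3 hw2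
  have np4 : ∀ c : ℂ, v2 ≠ c • w2 :=
    not_parallel (fun h => re_ne_of_add_two l2 h.symm) k3 k1 hv2
  have hb1 : ¬ 0 < l1.re := fun h =>
    main_contradiction hS1 g1 g3 hv1 hw1 h (by simp [Complex.add_re]; linarith) np1
  have hb2 : ¬ l1.re + 2 < 0 := fun h =>
    main_contradiction (skewJ_neg hS1) (genEv_neg g3) (genEv_neg g1) hw1 hv1
      (by simp [Complex.add_re]; linarith) (by simp; linarith) np2
  have hb3 : ¬ 0 < l2.re := fun h =>
    main_contradiction hS2 k1 k3 hv2 hw2 h (by simp [Complex.add_re]; linarith) np3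
  have hb4 : ¬ l2.re + 2 < 0 := fun h =>
    main_contradiction (skewJ_neg hS2) (genEv_neg k3) (genEv_neg k1) hw2 hv2
      (by simp [Complex.add_re]; linarith) (by simp; linarith) np4
  have hm1 : m1.re = 0 := by
    by_contra hm
    rcases lt_or_gt_of_ne hm with h | h
    · exact main_contradiction (skewJ_neg hS2) (genEv_neg g2) (genEv_neg g4) hv1 hw1
        (by simp; linarith) (by simp; linarith) np1
    · exact main_contradiction hS2 g2 g4 hv1 hw1 h h np1
  have hm2 : m2.re = 0 := by
    by_contra hm
    rcases lt_or_gt_of_ne hm with h | h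
    · exact main_contradiction (skewJ_neg hS1) (genEv_neg k2) (genEv_neg k4) hv2 hw2
        (by simp; linarith) (by simp; linarith) np3
    · exact main_contradiction hS1 k2 k4 hv2 hw2 h h np3
  obtain ⟨P, p, hPA1, hPA2, hPne, hpre⟩ :
      ∃ (P : Fin 4 → ℂ) (p : ℂ), GenEv A1 p P ∧ GenEv A2 m1 P ∧ P ≠ 0 ∧ p.re ≠ 0 := by
    rcases lt_or_ge 0 (l1.re + 2) with h | h
    · exact ⟨w1, l1 + 2, g3, g4, hw1, by simp [Complex.add_re]; linarith⟩
    · refine ⟨v1, l1, g1, g2, hv1, fun h0 => ?_⟩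
      rw [h0] at h; norm_num at h
  obtain ⟨Q, q, hQA2, hQA1, hQne, hqre⟩ :
      ∃ (Q : Fin 4 → ℂ) (q : ℂ), GenEv A2 q Q ∧ GenEv A1 m2 Q ∧ Q ≠ 0 ∧ q.re ≠ 0 := by
    rcases lt_or_ge 0 (l2.re + 2) with h | h
    · exact ⟨w2, l2 + 2, k3, k4, hw2, by simp [Complex.add_re]; linarith⟩
    · refine ⟨v2, l2, k1, k2, hv2, fun h0 => ?_⟩
      rw [h0] at h; norm_num at h
  have hpm2 : p ≠ m2 := fun h => hpre (by rw [h, hm2])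
  have npPQ : ∀ c : ℂ, Q ≠ c • P := not_parallel hpm2 hPA1 hQA1 hQne
  rcases hpre.lt_or_gt with hp | hp <;> rcases hqre.lt_or_gt with hq | hq
  · -- p.re < 0, q.re < 0
    have hX : SkewJ ((-1 : ℂ) • A1 + (-1 : ℂ) • A2) := by
      rw [neg_smul, one_smul, neg_smul, one_smul]
      exact skewJ_add (skewJ_neg hS1) (skewJ_neg hS2)
    exact main_contradiction hX
      (genEv_combine hcomm hPA1 hPA2 (-1) (-1))
      (genEv_combine hcomm hQA1 hQA2 (-1) (-1)) hPne hQne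
      (by simp only [neg_one_mul, Complex.add_re, Complex.neg_re, hm1]; linarith)
      (by simp only [neg_one_mul, Complex.add_re, Complex.neg_re, hm2, hqre]; linarith)
      npPQ
  · -- p.re < 0, q.re > 0
    have hX : SkewJ ((-1 : ℂ) • A1 + (1 : ℂ) • A2) := by
      rw [neg_smul, one_smul, one_smul]
      exact skewJ_add (skewJ_neg hS1) hS2
    exact main_contradiction hX
      (genEv_combine hcomm hPA1 hPA2 (-1) 1)
      (genEv_combine hcomm hQA1 hQA2 (-1) 1) hPne hQne
      (by simp only [neg_one_mul, one_mul, Complex.add_re, Complex.neg_re, hm1]; linarith)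
      (by simp only [neg_one_mul, one_mul, Complex.add_re, Complex.neg_re, hm2]; linarith)
      npPQ
  · -- p.re > 0, q.re < 0
    have hX : SkewJ ((1 : ℂ) • A1 + (-1 : ℂ) • A2) := by
      rw [neg_smul, one_smul, one_smul]
      exact skewJ_add hS1 (skewJ_neg hS2)
    exact main_contradiction hX
      (genEv_combine hcomm hPA1 hPA2 1 (-1))
      (genEv_combine hcomm hQA1 hQA2 1 (-1)) hPne hQne
      (by simp only [neg_one_mul, one_mul, Complex.add_re, Complex.neg_re, hm1]; linarith)
      (by simp only [neg_one_mul, one_mul, Complex.add_re, Complex.neg_re, hm2]; linarith)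
      npPQ
  · -- p.re > 0, q.re > 0
    have hX : SkewJ ((1 : ℂ) • A1 + (1 : ℂ) • A2) := by
      rw [one_smul, one_smul]
      exact skewJ_add hS1 hS2
    exact main_contradiction hX
      (genEv_combine hcomm hPA1 hPA2 1 1)
      (genEv_combine hcomm hQA1 hQA2 1 1) hPne hQne
      (by simp only [one_mul, Complex.add_re, hm1]; linarith)
      (by simp only [one_mul, Complex.add_re, hm2]; linarith)
      npPQ

/-! ### Concrete elements of `sp4` -/

def H1R : Matrix (Fin 4) (Fin 4) ℝ := !![1,0,0,0; 0,0,0,0; 0,0,-1,0; 0,0,0,0]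
def H2R : Matrix (Fin 4) (Fin 4) ℝ := !![0,0,0,0; 0,1,0,0; 0,0,0,0; 0,0,0,-1]
def E1R : Matrix (Fin 4) (Fin 4) ℝ := !![0,0,1,0; 0,0,0,0; 0,0,0,0; 0,0,0,0]
def E2R : Matrix (Fin 4) (Fin 4) ℝ := !![0,0,0,0; 0,0,0,1; 0,0,0,0; 0,0,0,0]

lemma H1R_mem : H1R ∈ sp4 := by
  show H1Rᵀ * Omega + Omega * H1R = 0
  ext i j
  fin_cases i <;> fin_cases j <;>
    simp [Omega, H1R, Matrix.mul_apply, Matrix.transpose_apply, Fin.sum_univ_four,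
      Matrix.vecHead, Matrix.vecTail]

lemma H2R_mem : H2R ∈ sp4 := by
  show H2Rᵀ * Omega + Omega * H2R = 0
  ext i j
  fin_cases i <;> fin_cases j <;>
    simp [Omega, H2R, Matrix.mul_apply, Matrix.transpose_apply, Fin.sum_univ_four,
      Matrix.vecHead, Matrix.vecTail]

lemma E1R_mem : E1R ∈ sp4 := by
  show E1Rᵀ * Omega + Omega * E1R = 0
  ext i j
  fin_cases i <;> fin_cases j <;>
    simp [Omega, E1R, Matrix.mul_apply, Matrix.transpose_apply, Fin.sum_univ_four,
      Matrix.vecHead, Matrix.vecTail]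

lemma E2R_mem : E2R ∈ sp4 := by
  show E2Rᵀ * Omega + Omega * E2R = 0
  ext i j
  fin_cases i <;> fin_cases j <;>
    simp [Omega, E2R, Matrix.mul_apply, Matrix.transpose_apply, Fin.sum_univ_four,
      Matrix.vecHead, Matrix.vecTail]

lemma bracket_H1_E1 : H1R * E1R - E1R * H1R = E1R + E1R := by
  ext i j
  fin_cases i <;> fin_cases j <;>
    simp [E1R, H1R, Matrix.mul_apply, Matrix.add_apply, Fin.sum_univ_four,
      Matrix.vecHead, Matrix.vecTail, Function.comp]

lemma bracket_H2_E1 : H2R * E1R - E1R * H2R = 0 := by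
  ext i j
  fin_cases i <;> fin_cases j <;>
    simp [E1R, H2R, Matrix.mul_apply, Fin.sum_univ_four,
      Matrix.vecHead, Matrix.vecTail, Function.comp]

lemma bracket_H2_E2 : H2R * E2R - E2R * H2R = E2R + E2R := by
  ext i j
  fin_cases i <;> fin_cases j <;>
    simp [E2R, H2R, Matrix.mul_apply, Matrix.add_apply, Fin.sum_univ_four,
      Matrix.vecHead, Matrix.vecTail, Function.comp]

lemma bracket_H1_E2 : H1R * E2R - E2R * H1R = 0 := by
  ext i j
  fin_cases i <;> fin_cases j <;>
    simp [E2R, H1R, Matrix.mul_apply, Fin.sum_univ_four,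
      Matrix.vecHead, Matrix.vecTail, Function.comp]

lemma bracket_H1_H2 : H1R * H2R - H2R * H1R = 0 := by
  ext i j
  fin_cases i <;> fin_cases j <;>
    simp [H1R, H2R, Matrix.mul_apply, Fin.sum_univ_four,
      Matrix.vecHead, Matrix.vecTail, Function.comp]

/-- There is no injective homomorphism of real Lie algebras from `sp(4,ℝ)` into `su(1,3)`. -/
theorem no_injective_hom_sp4R_su13 :
    ¬ ∃ f : sp4 →ₗ⁅ℝ⁆ su13, Function.Injective f := by
  rintro ⟨f, hf⟩
  set h1 : sp4 := ⟨H1R, H1R_mem⟩ with hh1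
  set h2 : sp4 := ⟨H2R, H2R_mem⟩ with hh2
  set e1 : sp4 := ⟨E1R, E1R_mem⟩ with he1
  set e2 : sp4 := ⟨E2R, E2R_mem⟩ with he2
  set A1 : M4 := (f h1 : M4) with hA1
  set A2 : M4 := (f h2 : M4) with hA2
  set B1 : M4 := (f e1 : M4) with hB1
  set B2 : M4 := (f e2 : M4) with hB2
  -- bracket relations in sp4
  have br1 : ⁅h1, e1⁆ = e1 + e1 := Subtype.ext (by
    rw [LieSubalgebra.coe_bracket, Ring.lie_def]
    exact bracket_H1_E1)
  have br2 : ⁅h2, e1⁆ = 0 := Subtype.ext (by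
    rw [LieSubalgebra.coe_bracket, Ring.lie_def]
    exact bracket_H2_E1)
  have br3 : ⁅h2, e2⁆ = e2 + e2 := Subtype.ext (by
    rw [LieSubalgebra.coe_bracket, Ring.lie_def]
    exact bracket_H2_E2)
  have br4 : ⁅h1, e2⁆ = 0 := Subtype.ext (by
    rw [LieSubalgebra.coe_bracket, Ring.lie_def]
    exact bracket_H1_E2)
  have br5 : ⁅h1, h2⁆ = 0 := Subtype.ext (by
    rw [LieSubalgebra.coe_bracket, Ring.lie_def]
    exact bracket_H1_H2)
  -- push through f and coerce to matrices
  have rel1 : A1 * B1 - B1 * A1 = B1 + B1 := by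
    have h := congrArg f br1
    rw [LieHom.map_lie, map_add] at h
    have h' := congrArg (fun z : su13 => (z : M4)) h
    simpa [LieSubalgebra.coe_bracket, Ring.lie_def] using h'
  have rel2 : A2 * B2 - B2 * A2 = B2 + B2 := by
    have h := congrArg f br3
    rw [LieHom.map_lie, map_add] at h
    have h' := congrArg (fun z : su13 => (z : M4)) h
    simpa [LieSubalgebra.coe_bracket, Ring.lie_def] using h'
  have com21 : Commute A2 B1 := by
    have h := congrArg f br2
    rw [LieHom.map_lie, map_zero] at h
    have h' := congrArg (fun z : su13 => (z : M4)) h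
    simp only [LieSubalgebra.coe_bracket, Ring.lie_def] at h'
    exact sub_eq_zero.mp (by simpa using h')
  have com12 : Commute A1 B2 := by
    have h := congrArg f br4
    rw [LieHom.map_lie, map_zero] at h
    have h' := congrArg (fun z : su13 => (z : M4)) h
    simp only [LieSubalgebra.coe_bracket, Ring.lie_def] at h'
    exact sub_eq_zero.mp (by simpa using h')
  have hcomm : Commute A1 A2 := by
    have h := congrArg f br5
    rw [LieHom.map_lie, map_zero] at h
    have h' := congrArg (fun z : su13 => (z : M4)) h
    simp only [LieSubalgebra.coe_bracket, Ring.lie_def] at h'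
    exact sub_eq_zero.mp (by simpa using h')
  -- nonvanishing
  have e1ne : e1 ≠ 0 := by
    intro h
    have := congrArg (fun z : sp4 => (z : Matrix (Fin 4) (Fin 4) ℝ) 0 2) h
    norm_num [he1, E1R, Matrix.cons_val_two] at this
  have e2ne : e2 ≠ 0 := by
    intro h
    have := congrArg (fun z : sp4 => (z : Matrix (Fin 4) (Fin 4) ℝ) 1 3) h
    norm_num [he2, E2R, Matrix.cons_val_three] at this
  have B1ne : B1 ≠ 0 := by
    intro h
    apply e1ne
    apply hf
    rw [map_zero]
    exact Subtype.ext (by simpa [hB1] using h)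
  have B2ne : B2 ≠ 0 := by
    intro h
    apply e2ne
    apply hf
    rw [map_zero]
    exact Subtype.ext (by simpa [hB2] using h)
  -- skewness
  have hS1 : SkewJ A1 := skewJ_of_mem (f h1).2
  have hS2 : SkewJ A2 := skewJ_of_mem (f h2).2
  -- joint generalized eigenvectors
  obtain ⟨l1, m1, v1, g1, g2, hv1, g3, g4, hw1⟩ := exists_joint A1 A2 B1 hcomm rel1 com21 B1ne
  obtain ⟨l2, m2, v2, k1, k2, hv2, k3, k4, hw2⟩ :=
    exists_joint A2 A1 B2 hcomm.symm rel2 com12 B2ne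
  exact final_contradiction hS1 hS2 hcomm hv1 hw1 hv2 hw2 g1 g2 g3 g4 k1 k2 k3 k4

end
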